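/- Let μ ∈ a*_Θ be such that ρ_Θ + μ is regular and integral. Then ρ_Θ + μ is dominant if and only if ⟨μ,γ⟩ > 0 for all γ ∈ Σ_Θ⁺. -/

import Mathlib

open Pointwise
open scoped RealInnerProductSpace

noncomputable section

variable {V : Type*} [NormedAddCommGroup V] [InnerProductSpace ℝ V] [FiniteDimensional ℝ V]

/-- The coroot `α∨ = 2α/⟨α,α⟩`. -/
def coroot (α : V) : V := (2 / ⟪α, α⟫) • α

/-- The reflection `s_α` in the root `α`, as a linear automorphism of `V`
(the orthogonal reflection fixing the hyperplane orthogonal to `α`). -/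
def rootRefl (α : V) : V ≃ₗ[ℝ] V :=
  (Submodule.reflection (Submodule.span ℝ {α})ᗮ).toLinearEquiv

/-- `w` is the longest element of the subgroup `H` with respect to a positive system `P`:
it lies in `H` and maps `P` onto `-P`. -/
def IsLongest (H : Subgroup (V ≃ₗ[ℝ] V)) (P : Set V) (w : V ≃ₗ[ℝ] V) : Prop :=
  w ∈ H ∧ ⇑w '' P = (fun x => -x) '' P

open Classical in
/-- The longest element of `H` with respect to `P` (junk value `1` if there is none). -/
def longest (H : Subgroup (V ≃ₗ[ℝ] V)) (P : Set V) : V ≃ₗ[ℝ] V :=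
  if h : ∃ w, IsLongest H P w then h.choose else 1

/-- The parabolic subgroup `W_Θ` generated by the reflections `s_α`, `α ∈ Θ`. -/
def parabolicSub (Θ : Set V) : Subgroup (V ≃ₗ[ℝ] V) :=
  Subgroup.closure {g | ∃ α ∈ Θ, g = rootRefl α}

/-- `a*_Θ`, the orthogonal complement of the span of `Θ`. -/
def aTheta (Θ : Set V) : Submodule ℝ V := (Submodule.span ℝ Θ)ᗮ

/-- The orthogonal projection onto `a*_Θ`; `resTheta Θ α` is `α|_{a_Θ}`. -/
def resTheta (Θ : Set V) (v : V) : V := (Submodule.orthogonalProjectionOnto (aTheta Θ) v : V)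

/-- The set of indecomposable elements of `P`: the base of a positive system `P`. -/
def baseOf (P : Set V) : Set V := {β ∈ P | ¬ ∃ γ ∈ P, ∃ δ ∈ P, β = γ + δ}

/-- Data of a root system with a chosen positive system `Δ⁺` and base `Π`. -/
structure RootData (V : Type*) [NormedAddCommGroup V] [InnerProductSpace ℝ V] where
  roots : Set V
  pos : Set V
  base : Set V

namespace RootData

variable (R : RootData V)

/-- The axioms: `Δ` is a finite reduced crystallographic root system spanning `V`,
`Δ⁺` is a positive system with base `Π`. -/
structure IsRootSystem : Prop where
  finite : R.roots.Finite
  span_eq_top : Submodule.span ℝ R.roots = ⊤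
  zero_not_mem : (0 : V) ∉ R.roots
  reduced : ∀ α ∈ R.roots, ∀ t : ℝ, t • α ∈ R.roots → t = 1 ∨ t = -1
  reflect_mem : ∀ α ∈ R.roots, ∀ β ∈ R.roots, rootRefl α β ∈ R.roots
  crystallographic : ∀ α ∈ R.roots, ∀ β ∈ R.roots, ∃ z : ℤ, (z : ℝ) = ⟪β, coroot α⟫
  pos_subset : R.pos ⊆ R.roots
  pos_iff_neg_not_mem : ∀ α ∈ R.roots, (α ∈ R.pos ↔ -α ∉ R.pos)
  base_subset : R.base ⊆ R.pos
  base_indep : LinearIndependent ℝ ((↑) : R.base → V)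
  pos_mem_closure : ∀ β ∈ R.pos, β ∈ AddSubmonoid.closure R.base

/-- The Weyl group of `Δ`, generated by the reflections in the roots. -/
def weylGroup : Subgroup (V ≃ₗ[ℝ] V) :=
  Subgroup.closure {g | ∃ α ∈ R.roots, g = rootRefl α}

/-- The set `S` of simple reflections `s_α`, `α ∈ Π`. -/
def simpleRefls : Set (V ≃ₗ[ℝ] V) := {g | ∃ α ∈ R.base, g = rootRefl α}

/-- `ρ`, half the sum of the positive roots. -/
def rho : V := (2 : ℝ)⁻¹ • ∑ᶠ α ∈ R.pos, α

/-- `w_Θ`, the longest element of `W_Θ`. -/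
def wTheta (Θ : Set V) : V ≃ₗ[ℝ] V :=
  longest (parabolicSub Θ) (R.pos ∩ (Submodule.span ℝ Θ : Set V))

/-- `ρ_Θ = (1/2)(ρ - w_Θ ρ)`. -/
def rhoTheta (Θ : Set V) : V := (2 : ℝ)⁻¹ • (R.rho - R.wTheta Θ R.rho)

/-- `Σ_Θ = {α|_{a_Θ} : α ∈ Δ} ∖ {0}`. -/
def SigmaTheta (Θ : Set V) : Set V := (resTheta Θ '' R.roots) \ {0}

/-- `Σ_Θ⁺ = {α|_{a_Θ} : α ∈ Δ⁺} ∖ {0}`. -/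
def SigmaThetaPos (Θ : Set V) : Set V := (resTheta Θ '' R.pos) \ {0}

/-- `W(Θ) = {w ∈ W : wΘ = Θ}`. -/
def Wset (Θ : Set V) : Set (V ≃ₗ[ℝ] V) := {w | w ∈ R.weylGroup ∧ ⇑w '' Θ = Θ}

/-- `Δ(α)`: the roots whose restriction to `a_Θ` is a real multiple of that of `α`. -/
def rootsAlong (Θ : Set V) (α : V) : Set V :=
  {β ∈ R.roots | ∃ c : ℝ, resTheta Θ β = c • resTheta Θ α}

/-- `Δ⁺(α) = Δ(α) ∩ Δ⁺`. -/
def posAlong (Θ : Set V) (α : V) : Set V := R.rootsAlong Θ α ∩ R.pos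

/-- `W_Θ(α)`, the Weyl group of `Δ(α)`. -/
def weylAlong (Θ : Set V) (α : V) : Subgroup (V ≃ₗ[ℝ] V) :=
  Subgroup.closure {g | ∃ β ∈ R.rootsAlong Θ α, g = rootRefl β}

/-- `σ_α = w^α w_Θ`, where `w^α` is the longest element of `W_Θ(α)`. -/
def sigmaRefl (Θ : Set V) (α : V) : V ≃ₗ[ℝ] V :=
  longest (R.weylAlong Θ α) (R.posAlong Θ α) * R.wTheta Θ

/-- `α` is `Θ`-useful if `σ_α` has order two. -/
def IsUseful (Θ : Set V) (α : V) : Prop := orderOf (R.sigmaRefl Θ α) = 2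

/-- `α` is `Θ`-reduced if `α|_{a_Θ} ≠ 0` and `α = α̃`, i.e. `α` belongs to the base `Π(α)`
of `Δ⁺(α)`. -/
def IsReducedRoot (Θ : Set V) (α : V) : Prop :=
  resTheta Θ α ≠ 0 ∧ α ∈ baseOf (R.posAlong Θ α)

/-- `ʳᵘΔ_Θ⁺`, the set of `Θ`-reduced `Θ`-useful positive roots. -/
def ruPos (Θ : Set V) : Set V :=
  {α ∈ R.pos | R.IsReducedRoot Θ α ∧ R.IsUseful Θ α}

/-- `W(Θ)′`, the subgroup generated by the `σ_α` for `α ∈ ʳᵘΔ_Θ⁺`. -/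
def WThetaPrime (Θ : Set V) : Subgroup (V ≃ₗ[ℝ] V) :=
  Subgroup.closure {g | ∃ α ∈ R.ruPos Θ, g = R.sigmaRefl Θ α}

/-- `ʳᵘΣ_Θ⁺ = {α|_{a_Θ} : α ∈ ʳᵘΔ_Θ⁺}`. -/
def ruSigmaPos (Θ : Set V) : Set V := resTheta Θ '' R.ruPos Θ

/-- `ʳᵘΣ_Θ = ʳᵘΣ_Θ⁺ ∪ (−ʳᵘΣ_Θ⁺)`. -/
def ruSigma (Θ : Set V) : Set V := R.ruSigmaPos Θ ∪ (fun x => -x) '' R.ruSigmaPos Θ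

/-- `ᵘΣ_Θ`, the set of restrictions of the `Θ`-useful roots. -/
def uSigma (Θ : Set V) : Set V := resTheta Θ '' {α ∈ R.roots | R.IsUseful Θ α}

/-- `ᵘΠ_Θ`, the base of `ʳᵘΣ_Θ⁺`. -/
def uPi (Θ : Set V) : Set V := baseOf (R.ruSigmaPos Θ)

/-- `S(Θ) = {σ_γ : γ ∈ ᵘΠ_Θ}`. -/
def SThetaSet (Θ : Set V) : Set (V ≃ₗ[ℝ] V) :=
  {g | ∃ α ∈ R.ruPos Θ, resTheta Θ α ∈ R.uPi Θ ∧ g = R.sigmaRefl Θ α}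

/-- `K(Θ) = {w ∈ W : wΘ ⊆ Π}`. -/
def Kset (Θ : Set V) : Set (V ≃ₗ[ℝ] V) := {w | w ∈ R.weylGroup ∧ ⇑w '' Θ ⊆ R.base}

/-- `Θ` is normal if every simple root outside `Θ` is `Θ`-useful. -/
def IsNormal (Θ : Set V) : Prop := ∀ α ∈ R.base \ Θ, R.IsUseful Θ α

/-- `Θ` is seminormal. -/
def IsSeminormal (Θ : Set V) : Prop :=
  ∃ Ψ : Set V, Θ ⊆ Ψ ∧ Ψ ⊆ R.base ∧ R.uPi Θ = resTheta Θ '' (Ψ \ Θ)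

/-- `ξ` is integral: `⟨ξ,α∨⟩ ∈ ℤ` for all roots `α`. -/
def IsIntegral (ξ : V) : Prop := ∀ α ∈ R.roots, ∃ z : ℤ, ⟪ξ, coroot α⟫ = (z : ℝ)

/-- `ξ` is regular: `⟨ξ,α⟩ ≠ 0` for all roots `α`. -/
def IsRegular (ξ : V) : Prop := ∀ α ∈ R.roots, ⟪ξ, α⟫ ≠ 0

/-- `ξ` is dominant: `⟨ξ,α∨⟩ ≥ 0` for all positive roots `α`. -/
def IsDominant (ξ : V) : Prop := ∀ α ∈ R.pos, 0 ≤ ⟪ξ, coroot α⟫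

end RootData

/-- The length of `w` with respect to a generating set `S`. -/
def lengthWrt {G : Type*} [Group G] (S : Set G) (w : G) : ℕ :=
  sInf {k | ∃ l : List G, (∀ s ∈ l, s ∈ S) ∧ l.prod = w ∧ l.length = k}

/-- A reduced word with letters in `S`. -/
def IsReducedWordWrt {G : Type*} [Group G] (S : Set G) (l : List G) : Prop :=
  (∀ s ∈ l, s ∈ S) ∧ lengthWrt S l.prod = l.length

/-- The Bruhat order with respect to `S`: `x ≤ y` iff some reduced word for `y` contains
a subword which is a reduced word for `x`. -/
def bruhatLEWrt {G : Type*} [Group G] (S : Set G) (x y : G) : Prop :=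
  ∃ l : List G, IsReducedWordWrt S l ∧ l.prod = y ∧
    ∃ l' : List G, l'.Sublist l ∧ IsReducedWordWrt S l' ∧ l'.prod = x

/-- `(W₂,S₂)` is a quasi subsystem of `(W₁,S₁)`: `W₂` is a subgroup of `W₁`, and for every
reduced expression `w = s₁ ⋯ s_k` in `(W₂,S₂)` one has `ℓ₁(w) = ℓ₁(s₁) + ⋯ + ℓ₁(s_k)`. -/
def IsQuasiSubsystemWrt {G : Type*} [Group G] (W₁ W₂ : Subgroup G) (S₁ S₂ : Set G) : Prop :=
  W₂ ≤ W₁ ∧ ∀ l : List G, (∀ s ∈ l, s ∈ S₂) → lengthWrt S₂ l.prod = l.length →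
    lengthWrt S₁ l.prod = (l.map (lengthWrt S₁)).sum


/-! ### Auxiliary lemmas for Lemma 2.4.3 -/

section Aux243

variable {V : Type*} [NormedAddCommGroup V] [InnerProductSpace ℝ V] [FiniteDimensional ℝ V]

lemma inner_self_pos' {x : V} (hx : x ≠ 0) : 0 < ⟪x, x⟫ :=
  lt_of_not_ge fun h => hx (real_inner_self_nonpos.mp h)

lemma inner_coroot_right (x α : V) : ⟪x, coroot α⟫ = 2 / ⟪α, α⟫ * ⟪x, α⟫ := by
  simp [coroot, real_inner_smul_right]

lemma rootRefl_apply' (α x : V) (hα : α ≠ 0) :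
    rootRefl α x = x - ⟪x, coroot α⟫ • α := by
  have hn : ⟪α, α⟫ ≠ 0 := ne_of_gt (inner_self_pos' hα)
  have hproj : ((Submodule.span ℝ {α}).starProjection x : V)
      = (⟪α, x⟫ / (‖α‖ ^ 2)) • α := by
    simpa using Submodule.starProjection_singleton (𝕜 := ℝ) (v := α) x
  have hsplit := Submodule.starProjection_add_starProjection_orthogonal
    (K := Submodule.span ℝ {α}) x
  rw [hproj] at hsplit
  have h2 : ((Submodule.span ℝ {α})ᗮ.starProjection x : V)
      = x - (⟪α, x⟫ / (‖α‖ ^ 2)) • α := eq_sub_of_add_eq' hsplit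
  show Submodule.reflection (Submodule.span ℝ {α})ᗮ x = _
  rw [Submodule.reflection_apply, h2, inner_coroot_right, real_inner_comm x α]
  have hnorm : ‖α‖ ^ 2 = ⟪α, α⟫ := (real_inner_self_eq_norm_sq α).symm
  rw [hnorm]
  match_scalars
  all_goals ring

lemma rootRefl_inner (α x y : V) : ⟪rootRefl α x, rootRefl α y⟫ = ⟪x, y⟫ :=
  (Submodule.reflection (Submodule.span ℝ {α})ᗮ).inner_map_map x y

lemma rootRefl_rootRefl (α x : V) : rootRefl α (rootRefl α x) = x :=
  Submodule.reflection_reflection _ x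

lemma rootRefl_self (α : V) (hα : α ≠ 0) : rootRefl α α = -α := by
  have hn : ⟪α, α⟫ ≠ 0 := ne_of_gt (inner_self_pos' hα)
  rw [rootRefl_apply' α α hα, inner_coroot_right, div_mul_cancel₀ 2 hn]
  match_scalars
  all_goals ring

variable {R : RootData V}

lemma root_ne_zero (hR : R.IsRootSystem) {α : V} (hα : α ∈ R.roots) : α ≠ 0 :=
  fun h => hR.zero_not_mem (h ▸ hα)

lemma root_inner_self_pos (hR : R.IsRootSystem) {α : V} (hα : α ∈ R.roots) : 0 < ⟪α, α⟫ :=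
  inner_self_pos' (root_ne_zero hR hα)

lemma mem_pos_of_not_neg (hR : R.IsRootSystem) {α : V} (hα : α ∈ R.roots) (h : α ∉ R.pos) :
    -α ∈ R.pos := by
  by_contra h2
  exact h ((hR.pos_iff_neg_not_mem α hα).2 h2)

lemma exists_nonneg_combo (hR : R.IsRootSystem) {β : V} (hβ : β ∈ R.pos) :
    ∃ f : V →₀ ℝ, ↑f.support ⊆ R.base ∧ (∀ b, 0 ≤ f b) ∧ (f.sum fun b c => c • b) = β := by
  have h := hR.pos_mem_closure β hβ
  clear hβ
  induction h using AddSubmonoid.closure_induction with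
  | mem x hx =>
    refine ⟨Finsupp.single x 1, ?_, ?_, ?_⟩
    · intro b hb
      have : b ∈ ({x} : Finset V) := Finsupp.support_single_subset hb
      rw [Finset.mem_singleton] at this
      rwa [this]
    · intro b
      classical
      rw [Finsupp.single_apply]
      split <;> norm_num
    · rw [Finsupp.sum_single_index (by simp)]
      simp
  | zero => exact ⟨0, by simp, fun b => le_refl 0, by simp⟩
  | add x y hx hy ihx ihy =>
    obtain ⟨f, hf1, hf2, hf3⟩ := ihx
    obtain ⟨g, hg1, hg2, hg3⟩ := ihy
    classical
    refine ⟨f + g, ?_, fun b => add_nonneg (hf2 b) (hg2 b), ?_⟩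
    · intro b hb
      rcases Finset.mem_union.mp (Finsupp.support_add hb) with h' | h'
      · exact hf1 h'
      · exact hg1 h'
    · rw [Finsupp.sum_add_index' (fun b => zero_smul ℝ b) (fun b r s => add_smul r s b)]
      rw [hf3, hg3]

lemma coeff_unique (hR : R.IsRootSystem) {f g : V →₀ ℝ} (hf : ↑f.support ⊆ R.base)
    (hg : ↑g.support ⊆ R.base)
    (h : (f.sum fun b c => c • b) = g.sum fun b c => c • b) : f = g := by
  classical
  have hli := hR.base_indep
  have h0 := linearIndepOn_iff.mp (linearIndependent_subtype_iff.mp hli) (f - g) ?_ ?_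
  · exact sub_eq_zero.mp h0
  · rw [Finsupp.mem_supported]
    intro b hb
    rcases Finset.mem_union.mp (Finsupp.support_sub (by exact_mod_cast hb)) with h' | h'
    · exact hf h'
    · exact hg h'
  · rw [map_sub, Finsupp.linearCombination_apply, Finsupp.linearCombination_apply]
    have e1 : (f.sum fun i a => a • id i) = f.sum fun b c => c • b := rfl
    have e2 : (g.sum fun i a => a • id i) = g.sum fun b c => c • b := rfl
    rw [e1, e2, h, sub_self]

lemma combo_eq_single_smul {f : V →₀ ℝ} {θ β : V} (hsupp : f.support ⊆ {θ})
    (hfsum : (f.sum fun b c => c • b) = β) : β = f θ • θ := by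
  classical
  rw [← hfsum, Finsupp.sum, Finset.sum_subset hsupp]
  · rw [Finset.sum_singleton]
  · intro x _ hx
    rw [Finsupp.notMem_support_iff.mp hx, zero_smul]

lemma rootRefl_mem_pos (hR : R.IsRootSystem) {θ β : V} (hθ : θ ∈ R.base) (hβ : β ∈ R.pos)
    (hne : β ≠ θ) : rootRefl θ β ∈ R.pos := by
  classical
  have hθr : θ ∈ R.roots := hR.pos_subset (hR.base_subset hθ)
  have hβr : β ∈ R.roots := hR.pos_subset hβ
  have hθ0 : θ ≠ 0 := root_ne_zero hR hθr
  have hγr : rootRefl θ β ∈ R.roots := hR.reflect_mem θ hθr β hβr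
  by_contra hcon
  have hnγ : -(rootRefl θ β) ∈ R.pos := mem_pos_of_not_neg hR hγr hcon
  obtain ⟨f, hfs, hf0, hfsum⟩ := exists_nonneg_combo hR hβ
  obtain ⟨g, hgs, hg0, hgsum⟩ := exists_nonneg_combo hR hnγ
  set c := ⟪β, coroot θ⟫ with hc
  have hγeq : -(rootRefl θ β) = c • θ - β := by
    rw [rootRefl_apply' θ β hθ0, neg_sub]
  have hsum : ((f + g).sum fun b c => c • b) = c • θ := by
    rw [Finsupp.sum_add_index' (fun b => zero_smul ℝ b) (fun b r s => add_smul r s b),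
      hfsum, hgsum, hγeq]
    abel
  have hfg : f + g = Finsupp.single θ c := by
    refine coeff_unique hR ?_ ?_ ?_
    · intro b hb
      rcases Finset.mem_union.mp (Finsupp.support_add (by exact_mod_cast hb)) with h' | h'
      · exact hfs h'
      · exact hgs h'
    · intro b hb
      have : b ∈ ({θ} : Finset V) := Finsupp.support_single_subset hb
      rw [Finset.mem_singleton] at this
      rwa [this]
    · rw [hsum, Finsupp.sum_single_index (by simp)]
  have hsupp : f.support ⊆ {θ} := by
    intro b hb
    rw [Finset.mem_singleton]
    by_contra hbne
    have h1 : f b + g b = 0 := by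
      have h2 : (f + g) b = Finsupp.single θ c b := by rw [hfg]
      rw [Finsupp.add_apply, Finsupp.single_apply, if_neg (fun h => hbne h.symm)] at h2
      exact h2
    have h3 : f b = 0 := le_antisymm (by linarith [hg0 b]) (hf0 b)
    exact Finsupp.mem_support_iff.mp hb h3
  have hβeq : β = f θ • θ := combo_eq_single_smul hsupp hfsum
  rcases hR.reduced θ hθr (f θ) (by rw [← hβeq]; exact hβr) with h1 | h1
  · exact hne (by rw [hβeq, h1, one_smul])
  · have := hf0 θ
    rw [h1] at this
    linarith

lemma pos_span_combo (hR : R.IsRootSystem) {Θ : Set V} (hΘ : Θ ⊆ R.base) {β : V}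
    (hβ : β ∈ R.pos) (hsp : β ∈ Submodule.span ℝ Θ) :
    ∃ f : V →₀ ℝ, ↑f.support ⊆ Θ ∧ (∀ b, 0 ≤ f b) ∧ (f.sum fun b c => c • b) = β := by
  obtain ⟨f, hfs, hf0, hfsum⟩ := exists_nonneg_combo hR hβ
  obtain ⟨g, hgs, hgsum⟩ := Submodule.mem_span_set.mp hsp
  have hfg : f = g := coeff_unique hR hfs (hgs.trans hΘ) (hfsum.trans hgsum.symm)
  exact ⟨f, hfg ▸ hgs, hf0, hfsum⟩

lemma inner_nonneg_of_combo {Θ : Set V} {x β : V}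
    (f : V →₀ ℝ) (hfs : ↑f.support ⊆ Θ) (hf0 : ∀ b, 0 ≤ f b)
    (hfsum : (f.sum fun b c => c • b) = β) (hx : ∀ t ∈ Θ, 0 ≤ ⟪t, x⟫) : 0 ≤ ⟪β, x⟫ := by
  rw [← hfsum, Finsupp.sum, sum_inner]
  refine Finset.sum_nonneg fun b hb => ?_
  rw [real_inner_smul_left]
  exact mul_nonneg (hf0 b) (hx b (hfs hb))

/-- The package of properties of elements of `W_Θ` that we need. -/
def IsNiceAut (R : RootData V) (Θ : Set V) (w : V ≃ₗ[ℝ] V) : Prop :=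
  (∀ x y : V, ⟪w x, w y⟫ = ⟪x, y⟫) ∧ Set.MapsTo w R.roots R.roots ∧
    (∀ x ∈ aTheta Θ, w x = x) ∧
    Set.MapsTo w (R.pos \ (Submodule.span ℝ Θ : Set V)) (R.pos \ (Submodule.span ℝ Θ : Set V))

lemma isNiceAut_of_mem (hR : R.IsRootSystem) {Θ : Set V} (hΘ : Θ ⊆ R.base) {w : V ≃ₗ[ℝ] V}
    (hw : w ∈ parabolicSub Θ) : IsNiceAut R Θ w := by
  have hw' : w ∈ Subgroup.closure {g : V ≃ₗ[ℝ] V | ∃ α ∈ Θ, g = rootRefl α} := hw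
  clear hw
  induction hw' using Subgroup.closure_induction with
  | mem g hg =>
    obtain ⟨α, hα, rfl⟩ := hg
    have hαb : α ∈ R.base := hΘ hα
    have hαr : α ∈ R.roots := hR.pos_subset (hR.base_subset hαb)
    have hα0 : α ≠ 0 := root_ne_zero hR hαr
    refine ⟨rootRefl_inner α, fun β hβ => hR.reflect_mem α hαr β hβ, ?_, ?_⟩
    · intro x hx
      have hxa : ⟪x, α⟫ = 0 := by
        rw [real_inner_comm]
        exact (Submodule.mem_orthogonal _ x).mp hx α (Submodule.subset_span hα)
      rw [rootRefl_apply' α x hα0, inner_coroot_right, hxa, mul_zero, zero_smul, sub_zero]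
    · rintro β ⟨hβp, hβs⟩
      have hβθ : β ≠ α := fun h => hβs (h ▸ Submodule.subset_span hα)
      refine ⟨rootRefl_mem_pos hR hαb hβp hβθ, fun hmem => hβs ?_⟩
      have hre : β = rootRefl α β + ⟪β, coroot α⟫ • α := by
        rw [rootRefl_apply' α β hα0]
        abel
      rw [hre]
      exact Submodule.add_mem _ hmem (Submodule.smul_mem _ _ (Submodule.subset_span hα))
  | one =>
    exact ⟨fun x y => rfl, fun x hx => hx, fun x _ => rfl, fun x hx => hx⟩
  | mul x y hx hy hx' hy' =>
    obtain ⟨h1, h2, h3, h4⟩ := hx'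
    obtain ⟨g1, g2, g3, g4⟩ := hy'
    have hxy : ∀ v, (x * y) v = x (y v) := fun v => rfl
    exact ⟨fun u v => by rw [hxy, hxy, h1, g1], fun v hv => by rw [hxy]; exact h2 (g2 hv),
      fun v hv => by rw [hxy, g3 v hv]; exact h3 v hv,
      fun v hv => by rw [hxy]; exact h4 (g4 hv)⟩
  | inv x hx hx' =>
    obtain ⟨h1, h2, h3, h4⟩ := hx'
    have hinv : ∀ v, x ((x⁻¹ : V ≃ₗ[ℝ] V) v) = v := fun v => x.apply_symm_apply v
    have hinv' : ∀ v, (x⁻¹ : V ≃ₗ[ℝ] V) (x v) = v := fun v => x.symm_apply_apply v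
    refine ⟨fun u v => ?_, ?_, fun v hv => ?_, ?_⟩
    · rw [← h1 ((x⁻¹ : V ≃ₗ[ℝ] V) u) ((x⁻¹ : V ≃ₗ[ℝ] V) v), hinv, hinv]
    · have hbij := (hR.finite.injOn_iff_bijOn_of_mapsTo h2).mp x.injective.injOn
      intro v hv
      obtain ⟨u, hu, huv⟩ := hbij.surjOn hv
      have : (x⁻¹ : V ≃ₗ[ℝ] V) v = u := by rw [← huv, hinv']
      rwa [this]
    · conv_lhs => rw [← h3 v hv]
      exact hinv' v
    · have hfin : (R.pos \ (Submodule.span ℝ Θ : Set V)).Finite :=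
        (hR.finite.subset hR.pos_subset).subset Set.diff_subset
      have hbij := (hfin.injOn_iff_bijOn_of_mapsTo h4).mp x.injective.injOn
      intro v hv
      obtain ⟨u, hu, huv⟩ := hbij.surjOn hv
      have : (x⁻¹ : V ≃ₗ[ℝ] V) v = u := by rw [← huv, hinv']
      rwa [this]

lemma res_eq_zero_iff {Θ : Set V} {β : V} :
    resTheta Θ β = 0 ↔ β ∈ Submodule.span ℝ Θ := by
  rw [resTheta, ZeroMemClass.coe_eq_zero, Submodule.orthogonalProjectionOnto_eq_zero_iff, aTheta,
    Submodule.orthogonal_orthogonal]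

lemma inner_res {Θ : Set V} {μ : V} (β : V) (hμ : μ ∈ aTheta Θ) :
    ⟪μ, resTheta Θ β⟫ = ⟪μ, β⟫ := by
  rw [resTheta, show ((Submodule.orthogonalProjectionOnto (aTheta Θ) β : V))
      = (aTheta Θ).starProjection β from rfl, ← Submodule.inner_starProjection_left_eq_right,
    Submodule.starProjection_eq_self_iff.mpr hμ]

end Aux243

section Aux243b

variable {V : Type*} [NormedAddCommGroup V] [InnerProductSpace ℝ V] [FiniteDimensional ℝ V]
variable {R : RootData V}

lemma sum_w_eq_neg_sum (w : V ≃ₗ[ℝ] V) (F : Finset V)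
    (himg : ⇑w '' ↑F = (fun x => -x) '' ↑F) : ∑ β ∈ F, w β = - ∑ β ∈ F, β := by
  classical
  have h1 : F.image (⇑w) = F.image (fun x => -x) := by
    apply Finset.coe_injective
    rw [Finset.coe_image, Finset.coe_image, himg]
  have h2 : ∑ β ∈ F, w β = ∑ x ∈ F.image (⇑w), x :=
    (Finset.sum_image (f := fun x => x) (g := ⇑w) (fun a _ b _ h => w.injective h)).symm
  have h3 : ∑ x ∈ F.image (fun x => -x), x = ∑ β ∈ F, -β :=
    Finset.sum_image (f := fun x => x) (g := fun x => -x) (fun a _ b _ h => neg_injective h)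
  rw [h2, h1, h3, Finset.sum_neg_distrib]

lemma sum_w_eq_sum (w : V ≃ₗ[ℝ] V) (F : Finset V)
    (himg : ⇑w '' ↑F = ↑F) : ∑ β ∈ F, w β = ∑ β ∈ F, β := by
  classical
  have h1 : F.image (⇑w) = F := Finset.coe_injective (by rw [Finset.coe_image, himg])
  have h2 : ∑ β ∈ F, w β = ∑ x ∈ F.image (⇑w), x :=
    (Finset.sum_image (f := fun x => x) (g := ⇑w) (fun a _ b _ h => w.injective h)).symm
  rw [h2, h1]

lemma rhoTheta_eq_halfsum (hR : R.IsRootSystem) {Θ : Set V} (hΘ : Θ ⊆ R.base)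
    (hlg : IsLongest (parabolicSub Θ) (R.pos ∩ (Submodule.span ℝ Θ : Set V)) (R.wTheta Θ))
    (F G : Finset V) (hF : ↑F = R.pos ∩ (Submodule.span ℝ Θ : Set V))
    (hG : ↑G = R.pos \ (Submodule.span ℝ Θ : Set V)) :
    R.rhoTheta Θ = (2:ℝ)⁻¹ • ∑ β ∈ F, β ∧ R.wTheta Θ (R.rhoTheta Θ) = - R.rhoTheta Θ := by
  classical
  set w₀ := R.wTheta Θ with hw₀
  have hnice := isNiceAut_of_mem hR hΘ hlg.1
  have hdisj : Disjoint F G := by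
    rw [Finset.disjoint_left]
    intro x hxF hxG
    have h1 : x ∈ R.pos ∩ (Submodule.span ℝ Θ : Set V) := hF ▸ Finset.mem_coe.mpr hxF
    have h2 : x ∈ R.pos \ (Submodule.span ℝ Θ : Set V) := hG ▸ Finset.mem_coe.mpr hxG
    exact h2.2 h1.2
  have hunion : (↑(F ∪ G) : Set V) = R.pos := by
    rw [Finset.coe_union, hF, hG]
    ext x
    constructor
    · rintro (h | h)
      · exact h.1
      · exact h.1
    · intro hx
      by_cases hsp : x ∈ (Submodule.span ℝ Θ : Set V)
      · exact Or.inl ⟨hx, hsp⟩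
      · exact Or.inr ⟨hx, hsp⟩
  have hrho : R.rho = (2:ℝ)⁻¹ • (∑ β ∈ F, β + ∑ β ∈ G, β) := by
    simp only [RootData.rho]
    rw [← hunion, finsum_mem_coe_finset, Finset.sum_union hdisj]
  have hsumF : ∑ β ∈ F, w₀ β = - ∑ β ∈ F, β :=
    sum_w_eq_neg_sum w₀ F (by rw [hF]; exact hlg.2)
  have himgG : ⇑w₀ '' ↑G = ↑G := by
    rw [hG]
    exact ((((hR.finite.subset hR.pos_subset).subset
      Set.diff_subset).injOn_iff_bijOn_of_mapsTo hnice.2.2.2).mp w₀.injective.injOn).image_eq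
  have hsumG : ∑ β ∈ G, w₀ β = ∑ β ∈ G, β := sum_w_eq_sum w₀ G himgG
  have hwrho : w₀ R.rho = (2:ℝ)⁻¹ • (-∑ β ∈ F, β + ∑ β ∈ G, β) := by
    rw [hrho, map_smul, map_add]
    simp only [map_sum]
    rw [hsumF, hsumG]
  have hhalf : R.rhoTheta Θ = (2:ℝ)⁻¹ • ∑ β ∈ F, β := by
    simp only [RootData.rhoTheta, ← hw₀]
    rw [hwrho, hrho]
    match_scalars
    all_goals ring
  refine ⟨hhalf, ?_⟩
  rw [hhalf, map_smul, map_sum, hsumF, smul_neg]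

end Aux243b

set_option maxHeartbeats 1000000 in
/-- Lemma 2.4.3: `ρ_Θ + μ` (regular integral) is dominant iff `⟨μ,γ⟩ > 0` for all
`γ ∈ Σ_Θ⁺`. -/
theorem dominant_iff_pos_on_SigmaThetaPos (R : RootData V) (hR : R.IsRootSystem)
    (Θ : Set V) (hΘ : Θ ⊆ R.base) (hne : Θ ≠ R.base)
    (μ : V) (hμ : μ ∈ aTheta Θ)
    (hreg : R.IsRegular (R.rhoTheta Θ + μ)) (hint : R.IsIntegral (R.rhoTheta Θ + μ)) :
    R.IsDominant (R.rhoTheta Θ + μ) ↔ ∀ γ ∈ R.SigmaThetaPos Θ, 0 < ⟪μ, γ⟫ := by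
  classical
  by_cases hex : ∃ w, IsLongest (parabolicSub Θ) (R.pos ∩ (Submodule.span ℝ Θ : Set V)) w
  · -- the longest element of `W_Θ` exists
    have hlg : IsLongest (parabolicSub Θ) (R.pos ∩ (Submodule.span ℝ Θ : Set V))
        (R.wTheta Θ) := by
      simp only [RootData.wTheta, longest]
      rw [dif_pos hex]
      exact hex.choose_spec
    set w₀ := R.wTheta Θ with hw₀def
    have hnice := isNiceAut_of_mem hR hΘ hlg.1
    have hnice' := isNiceAut_of_mem hR hΘ (inv_mem hlg.1)
    have hposfin : R.pos.Finite := hR.finite.subset hR.pos_subset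
    have hPfin : (R.pos ∩ (Submodule.span ℝ Θ : Set V)).Finite := hposfin.inter_of_left _
    have hDfin : (R.pos \ (Submodule.span ℝ Θ : Set V)).Finite := hposfin.subset Set.diff_subset
    obtain ⟨hhalf, hw₀ρ⟩ := rhoTheta_eq_halfsum hR hΘ hlg hPfin.toFinset hDfin.toFinset
      hPfin.coe_toFinset hDfin.coe_toFinset
    set F := hPfin.toFinset with hFdef
    have hF : (↑F : Set V) = R.pos ∩ (Submodule.span ℝ Θ : Set V) := hPfin.coe_toFinset
    set lam := R.rhoTheta Θ + μ with hlamdef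
    have hμinner : ∀ x ∈ Submodule.span ℝ Θ, ⟪μ, x⟫ = 0 := fun x hx => by
      rw [real_inner_comm]
      exact (Submodule.mem_orthogonal _ μ).mp hμ x hx
    have hlamθ : ∀ θ ∈ Θ, ⟪lam, θ⟫ = ⟪θ, θ⟫ / 2 := by
      intro θ hθΘ
      have hθb : θ ∈ R.base := hΘ hθΘ
      have hθpos : θ ∈ R.pos := hR.base_subset hθb
      have hθr : θ ∈ R.roots := hR.pos_subset hθpos
      have hθ0 : θ ≠ 0 := root_ne_zero hR hθr
      have hθsp : θ ∈ Submodule.span ℝ Θ := Submodule.subset_span hθΘ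
      have hθF : θ ∈ F := by
        rw [← Finset.mem_coe, hF]
        exact ⟨hθpos, hθsp⟩
      have hsplit : ∑ β ∈ F, β = θ + ∑ β ∈ F.erase θ, β := (Finset.add_sum_erase F _ hθF).symm
      have herase : ∀ β ∈ F.erase θ, rootRefl θ β ∈ F.erase θ := by
        intro β hβ
        have hβθ : β ≠ θ := Finset.ne_of_mem_erase hβ
        have hβP : β ∈ R.pos ∩ (Submodule.span ℝ Θ : Set V) := by
          rw [← hF]
          exact Finset.mem_coe.mpr (Finset.mem_of_mem_erase hβ)
        have h1 : rootRefl θ β ∈ R.pos := rootRefl_mem_pos hR hθb hβP.1 hβθ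
        have h2 : rootRefl θ β ∈ Submodule.span ℝ Θ := by
          rw [rootRefl_apply' θ β hθ0]
          exact Submodule.sub_mem _ hβP.2 (Submodule.smul_mem _ _ hθsp)
        have h3 : rootRefl θ β ≠ θ := by
          intro hcon
          have h4 : β = rootRefl θ θ := by
            have h5 := congrArg (fun v => rootRefl θ v) hcon
            rw [rootRefl_rootRefl] at h5
            rw [← h5]
          rw [rootRefl_self θ hθ0] at h4
          have h5 := (hR.pos_iff_neg_not_mem θ hθr).1 hθpos
          rw [← h4] at h5
          exact h5 hβP.1
        refine Finset.mem_erase.mpr ⟨h3, ?_⟩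
        rw [← Finset.mem_coe, hF]
        exact ⟨h1, h2⟩
      have hSinv : rootRefl θ (∑ β ∈ F.erase θ, β) = ∑ β ∈ F.erase θ, β := by
        rw [map_sum]
        exact Finset.sum_nbij' (fun β => rootRefl θ β) (fun β => rootRefl θ β)
          herase herase (fun x _ => rootRefl_rootRefl θ x) (fun x _ => rootRefl_rootRefl θ x)
          (fun x _ => rfl)
      have hSθ : ⟪∑ β ∈ F.erase θ, β, θ⟫ = 0 := by
        have h5 := rootRefl_inner θ (∑ β ∈ F.erase θ, β) θ
        rw [hSinv, rootRefl_self θ hθ0, inner_neg_right] at h5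
        linarith
      have hρθ : ⟪R.rhoTheta Θ, θ⟫ = ⟪θ, θ⟫ / 2 := by
        rw [hhalf, hsplit, real_inner_smul_left, inner_add_left, hSθ, add_zero]
        ring
      rw [hlamdef, inner_add_left, hμinner θ hθsp, add_zero, hρθ]
    -- the two directions
    constructor
    · -- dominant → positive on Σ_Θ⁺
      intro hdom γ hγ
      simp only [RootData.SigmaThetaPos, Set.mem_diff, Set.mem_image,
        Set.mem_singleton_iff] at hγ
      obtain ⟨⟨α, hαpos, rfl⟩, hγ0⟩ := hγ
      have hαsp : α ∉ Submodule.span ℝ Θ := fun h => hγ0 (res_eq_zero_iff.mpr h)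
      have hαr : α ∈ R.roots := hR.pos_subset hαpos
      have hposval : ∀ α' ∈ R.pos, 0 < ⟪lam, α'⟫ := by
        intro α' hα'pos
        have hα'r : α' ∈ R.roots := hR.pos_subset hα'pos
        have h3 := hdom α' hα'pos
        rw [inner_coroot_right] at h3
        have hs := root_inner_self_pos hR hα'r
        rcases (hreg α' hα'r).lt_or_gt with h5 | h5
        · exfalso
          have h6 : 0 < 2 / ⟪α', α'⟫ := by positivity
          nlinarith
        · exact h5
      have hα' : w₀⁻¹ α ∈ R.pos \ (Submodule.span ℝ Θ : Set V) := hnice'.2.2.2 ⟨hαpos, hαsp⟩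
      have hw₀lam : w₀ lam = μ - R.rhoTheta Θ := by
        rw [hlamdef, map_add, hnice.2.2.1 μ hμ, hw₀ρ]
        abel
      have hkey : ⟪lam, α⟫ + ⟪lam, w₀⁻¹ α⟫ = 2 * ⟪μ, α⟫ := by
        have h1 : ⟪lam, w₀⁻¹ α⟫ = ⟪w₀ lam, α⟫ := by
          have h2 := hnice.1 lam (w₀⁻¹ α)
          rw [show w₀ (w₀⁻¹ α) = α from w₀.apply_symm_apply α] at h2
          exact h2.symm
        rw [h1, hw₀lam, hlamdef, inner_add_left, inner_sub_left]
        ring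
      have hpos1 : 0 < ⟪lam, α⟫ := hposval α hαpos
      have hpos2 : 0 < ⟪lam, w₀⁻¹ α⟫ := hposval _ hα'.1
      rw [inner_res α hμ]
      linarith
    · -- positive on Σ_Θ⁺ → dominant
      intro hrhs
      have hμβ : ∀ β, β ∈ R.pos → β ∉ Submodule.span ℝ Θ → 0 < ⟪μ, β⟫ := by
        intro β hβ hβs
        have hres0 : resTheta Θ β ≠ 0 := fun h => hβs (res_eq_zero_iff.mp h)
        have hmem : resTheta Θ β ∈ R.SigmaThetaPos Θ := by
          simp only [RootData.SigmaThetaPos, Set.mem_diff, Set.mem_image,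
            Set.mem_singleton_iff]
          exact ⟨⟨β, hβ, rfl⟩, hres0⟩
        have h1 := hrhs _ hmem
        rwa [inner_res β hμ] at h1
      have hρnn : ∀ β : V, (∀ t ∈ Θ, 0 ≤ ⟪β, t⟫) → 0 ≤ ⟪R.rhoTheta Θ, β⟫ := by
        intro β hb
        rw [hhalf, real_inner_smul_left]
        refine mul_nonneg (by norm_num) ?_
        rw [sum_inner]
        refine Finset.sum_nonneg fun b hbF => ?_
        have hbP : b ∈ R.pos ∩ (Submodule.span ℝ Θ : Set V) := by
          rw [← hF]
          exact Finset.mem_coe.mpr hbF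
        obtain ⟨f, hfs, hf0, hfsum⟩ := pos_span_combo hR hΘ hbP.1 hbP.2
        exact inner_nonneg_of_combo f hfs hf0 hfsum fun t ht => by
          rw [real_inner_comm]
          exact hb t ht
      have hwalk : ∀ n : ℕ, ∀ β, β ∈ R.pos → β ∉ Submodule.span ℝ Θ → ⟪lam, β⟫ < 0 →
          ({δ | δ ∈ R.roots ∧ ⟪lam, β⟫ < ⟪lam, δ⟫}).ncard < n → False := by
        intro n
        induction n with
        | zero => exact fun β _ _ _ hc => absurd hc (Nat.not_lt_zero _)
        | succ n ih =>
          intro β hβpos hβsp hβneg hcard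
          have hβr : β ∈ R.roots := hR.pos_subset hβpos
          have hβ0 : β ≠ 0 := root_ne_zero hR hβr
          have hsβ : 0 < ⟪β, β⟫ := root_inner_self_pos hR hβr
          by_cases hcase : ∃ θ ∈ Θ, ⟪β, θ⟫ < 0
          · obtain ⟨θ, hθΘ, hβθ⟩ := hcase
            have hθb : θ ∈ R.base := hΘ hθΘ
            have hθpos : θ ∈ R.pos := hR.base_subset hθb
            have hθr : θ ∈ R.roots := hR.pos_subset hθpos
            have hθ0 : θ ≠ 0 := root_ne_zero hR hθr
            have hsθ : 0 < ⟪θ, θ⟫ := root_inner_self_pos hR hθr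
            have hθsp : θ ∈ Submodule.span ℝ Θ := Submodule.subset_span hθΘ
            have hlθ : ⟪lam, θ⟫ = ⟪θ, θ⟫ / 2 := hlamθ θ hθΘ
            obtain ⟨a, ha⟩ := hR.crystallographic θ hθr β hβr
            obtain ⟨b, hb⟩ := hR.crystallographic β hβr θ hθr
            obtain ⟨k, hk⟩ := hint β hβr
            have ha' : (a : ℝ) = 2 / ⟪θ, θ⟫ * ⟪β, θ⟫ := by rw [ha, inner_coroot_right]
            have hb' : (b : ℝ) = 2 / ⟪β, β⟫ * ⟪β, θ⟫ := by
              rw [hb, inner_coroot_right, real_inner_comm θ β]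
            have hk' : 2 / ⟪β, β⟫ * ⟪lam, β⟫ = (k : ℝ) := by rw [← hk, inner_coroot_right]
            have hkneg : k ≤ -1 := by
              have h1 : (k : ℝ) < 0 := by
                rw [← hk']
                have h2 : 0 < 2 / ⟪β, β⟫ := by positivity
                nlinarith
              have h2 : k < 0 := by exact_mod_cast h1
              omega
            have haneg : a ≤ -1 := by
              have h1 : (a : ℝ) < 0 := by
                rw [ha']
                have h2 : 0 < 2 / ⟪θ, θ⟫ := by positivity
                nlinarith
              have h2 : a < 0 := by exact_mod_cast h1
              omega
            have hbneg : b ≤ -1 := by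
              have h1 : (b : ℝ) < 0 := by
                rw [hb']
                have h2 : 0 < 2 / ⟪β, β⟫ := by positivity
                nlinarith
              have h2 : b < 0 := by exact_mod_cast h1
              omega
            set γ := rootRefl θ β with hγdef
            have hγpos : γ ∈ R.pos := rootRefl_mem_pos hR hθb hβpos fun h => hβsp (h ▸ hθsp)
            have hγr : γ ∈ R.roots := hR.reflect_mem θ hθr β hβr
            have hγeq : γ = β - ⟪β, coroot θ⟫ • θ := rootRefl_apply' θ β hθ0
            have hγsp : γ ∉ Submodule.span ℝ Θ := by
              intro h
              apply hβsp
              have hre : β = γ + ⟪β, coroot θ⟫ • θ := by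
                rw [hγeq]
                abel
              rw [hre]
              exact Submodule.add_mem _ h (Submodule.smul_mem _ _ hθsp)
            have hγγ : ⟪γ, γ⟫ = ⟪β, β⟫ := rootRefl_inner θ β β
            have hγlam : ⟪lam, γ⟫ = ⟪lam, β⟫ - ⟪β, coroot θ⟫ * ⟪lam, θ⟫ := by
              rw [hγeq, inner_sub_right, real_inner_smul_right]
            have haR : (a : ℝ) ≤ -1 := by exact_mod_cast haneg
            have hlt : ⟪lam, β⟫ < ⟪lam, γ⟫ := by
              rw [hγlam, ← ha, hlθ]
              nlinarith
            have hγcor : ⟪lam, coroot γ⟫ = (k : ℝ) - b := by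
              rw [inner_coroot_right, hγγ, hγlam, inner_coroot_right, hlθ]
              have e1 : 2 / ⟪β, β⟫ * (⟪lam, β⟫ - 2 / ⟪θ, θ⟫ * ⟪β, θ⟫ * (⟪θ, θ⟫ / 2)) =
                  2 / ⟪β, β⟫ * ⟪lam, β⟫ - 2 / ⟪β, β⟫ * ⟪β, θ⟫ := by
                field_simp
              rw [e1, hk', ← hb']
            have hMfin : ({δ | δ ∈ R.roots ∧ ⟪lam, β⟫ < ⟪lam, δ⟫}).Finite :=
              hR.finite.subset fun δ hδ => hδ.1
            have hss : {δ | δ ∈ R.roots ∧ ⟪lam, γ⟫ < ⟪lam, δ⟫} ⊂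
                {δ | δ ∈ R.roots ∧ ⟪lam, β⟫ < ⟪lam, δ⟫} := by
              refine ⟨fun δ hδ => ⟨hδ.1, hlt.trans hδ.2⟩, ?_⟩
              intro hsub
              exact lt_irrefl _ (hsub ⟨hγr, hlt⟩).2
            have hγcard : ({δ | δ ∈ R.roots ∧ ⟪lam, γ⟫ < ⟪lam, δ⟫}).ncard < n :=
              lt_of_lt_of_le (Set.ncard_lt_ncard hss hMfin) (Nat.lt_succ_iff.mp hcard)
            rcases (hreg γ hγr).lt_or_gt with hγneg | hγpos2
            · exact ih γ hγpos hγsp hγneg hγcard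
            · -- the pairing with `γ` crossed zero; use integrality to get a contradiction
              have hkb : b + 1 ≤ k := by
                have h1 : (0 : ℝ) < (k : ℝ) - b := by
                  rw [← hγcor, inner_coroot_right, hγγ]
                  have h2 : 0 < 2 / ⟪β, β⟫ := by positivity
                  nlinarith
                have h2 : (0 : ℤ) < k - b := by exact_mod_cast h1
                omega
              have hb2 : b ≤ -2 := by omega
              have hCS : ⟪β, θ⟫ * ⟪β, θ⟫ < ⟪β, β⟫ * ⟪θ, θ⟫ := by
                have hne2 : ‖-θ‖ • β ≠ ‖β‖ • (-θ) := by
                  intro hcon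
                  apply hβsp
                  have hθn : ‖θ‖ ≠ 0 := norm_ne_zero_iff.mpr hθ0
                  have hβeq : β = ‖θ‖⁻¹ • (‖β‖ • (-θ)) := by
                    rw [← hcon, norm_neg, smul_smul, inv_mul_cancel₀ hθn, one_smul]
                  rw [hβeq]
                  exact Submodule.smul_mem _ _ (Submodule.smul_mem _ _
                    (Submodule.neg_mem _ hθsp))
                have h2 : ⟪β, -θ⟫ < ‖β‖ * ‖-θ‖ := inner_lt_norm_mul_iff_real.mpr hne2
                rw [inner_neg_right, norm_neg] at h2
                have h3 : ⟪β, β⟫ = ‖β‖ * ‖β‖ := real_inner_self_eq_norm_mul_norm β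
                have h4 : ⟪θ, θ⟫ = ‖θ‖ * ‖θ‖ := real_inner_self_eq_norm_mul_norm θ
                nlinarith [norm_nonneg β, norm_nonneg θ]
              have hab : a * b ≤ 3 := by
                have h1 : (a : ℝ) * b < 4 := by
                  rw [ha', hb']
                  have e : 2 / ⟪θ, θ⟫ * ⟪β, θ⟫ * (2 / ⟪β, β⟫ * ⟪β, θ⟫) =
                      4 * (⟪β, θ⟫ * ⟪β, θ⟫) / (⟪θ, θ⟫ * ⟪β, β⟫) := by
                    field_simp
                    ring
                  rw [e, div_lt_iff₀ (by positivity)]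
                  nlinarith
                have h2 : (a * b : ℤ) < 4 := by exact_mod_cast h1
                omega
              have ha1 : a = -1 := by
                by_contra hcon
                have h1 : a ≤ -2 := by omega
                nlinarith [mul_nonneg (by linarith : (0:ℤ) ≤ -a - 2) (by linarith : (0:ℤ) ≤ -b - 2)]
              have hb3 : -3 ≤ b := by
                have h1 : (-1) * b ≤ 3 := ha1 ▸ hab
                linarith
              have hrel1 : 2 * ⟪β, θ⟫ = -⟪θ, θ⟫ := by
                have h1 := ha'
                rw [ha1] at h1
                push_cast at h1
                have h2 : ⟪θ, θ⟫ ≠ 0 := ne_of_gt hsθ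
                field_simp at h1
                linarith
              have hrel2 : 2 * ⟪β, θ⟫ = (b : ℝ) * ⟪β, β⟫ := by
                have h1 := hb'
                have h2 : ⟪β, β⟫ ≠ 0 := ne_of_gt hsβ
                field_simp at h1
                linarith
              have hθβ2 : ⟪θ, θ⟫ = -((b : ℝ) * ⟪β, β⟫) := by linarith
              have hlamβ : ⟪lam, β⟫ = (k : ℝ) * ⟪β, β⟫ / 2 := by
                have h1 := hk'
                have h2 : ⟪β, β⟫ ≠ 0 := ne_of_gt hsβ
                field_simp at h1
                linarith
              have hbR : (b : ℝ) ≠ 0 := by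
                have h1 : b ≠ 0 := by omega
                exact_mod_cast h1
              have hδ₁r : rootRefl β θ ∈ R.roots := hR.reflect_mem β hβr θ hθr
              have hδ₁eq : rootRefl β θ = θ - (b : ℝ) • β := by
                rw [rootRefl_apply' β θ hβ0, ← hb]
              have hδ₁inner : ⟪rootRefl β θ, rootRefl β θ⟫ = ⟪θ, θ⟫ := rootRefl_inner β θ θ
              have hδ₁lam : ⟪lam, rootRefl β θ⟫ = ⟪θ, θ⟫ / 2 - (b : ℝ) * ⟪lam, β⟫ := by
                rw [hδ₁eq, inner_sub_right, real_inner_smul_right, hlθ]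
              have hδ₁cor : ⟪lam, coroot (rootRefl β θ)⟫ = (k : ℝ) + 1 := by
                rw [inner_coroot_right, hδ₁inner, hδ₁lam, hlamβ, hθβ2]
                field_simp
                ring
              have hkne1 : k ≠ -1 := by
                intro hcon
                have h6 : ⟪lam, coroot (rootRefl β θ)⟫ = 0 := by
                  rw [hδ₁cor, hcon]
                  push_cast
                  ring
                rw [inner_coroot_right, hδ₁inner] at h6
                rcases mul_eq_zero.mp h6 with h8 | h8
                · have h7 : (2 : ℝ) / ⟪θ, θ⟫ ≠ 0 := by positivity
                  exact h7 h8
                · exact hreg _ hδ₁r h8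
              rcases (by omega : b = -2 ∨ b = -3) with hbv | hbv
              · omega
              · have hk2 : k = -2 := by omega
                have hδ₂r : rootRefl θ (rootRefl β θ) ∈ R.roots :=
                  hR.reflect_mem θ hθr _ hδ₁r
                have hδ₁θ : ⟪rootRefl β θ, θ⟫ = -(⟪θ, θ⟫ / 2) := by
                  rw [hδ₁eq, inner_sub_left, real_inner_smul_left, hbv]
                  push_cast
                  linarith
                have hδ₂eq : rootRefl θ (rootRefl β θ) =
                    rootRefl β θ - ⟪rootRefl β θ, coroot θ⟫ • θ := rootRefl_apply' θ _ hθ0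
                have hδ₂corθ : ⟪rootRefl β θ, coroot θ⟫ = -1 := by
                  rw [inner_coroot_right, hδ₁θ]
                  field_simp
                have hδ₂lam : ⟪lam, rootRefl θ (rootRefl β θ)⟫ =
                    ⟪lam, rootRefl β θ⟫ + ⟪θ, θ⟫ / 2 := by
                  rw [hδ₂eq, inner_sub_right, real_inner_smul_right, hδ₂corθ, hlθ]
                  ring
                have hδ₁lamval : ⟪lam, rootRefl β θ⟫ = ((k : ℝ) + 1) * ⟪θ, θ⟫ / 2 := by
                  have h1 := hδ₁cor
                  rw [inner_coroot_right, hδ₁inner] at h1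
                  have h2 : ⟪θ, θ⟫ ≠ 0 := ne_of_gt hsθ
                  field_simp at h1
                  linarith
                have hfinal : ⟪lam, rootRefl θ (rootRefl β θ)⟫ = 0 := by
                  rw [hδ₂lam, hδ₁lamval, hk2]
                  push_cast
                  ring
                exact hreg _ hδ₂r hfinal
          · push_neg at hcase
            have h1 : 0 ≤ ⟪R.rhoTheta Θ, β⟫ := hρnn β hcase
            have h2 : 0 < ⟪μ, β⟫ := hμβ β hβpos hβsp
            rw [hlamdef, inner_add_left] at hβneg
            linarith
      intro α hαpos
      have hαr : α ∈ R.roots := hR.pos_subset hαpos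
      have hsα : 0 < ⟪α, α⟫ := root_inner_self_pos hR hαr
      rw [inner_coroot_right]
      by_cases hαsp : α ∈ Submodule.span ℝ Θ
      · obtain ⟨f, hfs, hf0, hfsum⟩ := pos_span_combo hR hΘ hαpos hαsp
        have h1 : 0 ≤ ⟪α, lam⟫ := by
          refine inner_nonneg_of_combo f hfs hf0 hfsum fun t ht => ?_
          rw [real_inner_comm, hlamθ t ht]
          have h2 := real_inner_self_nonneg (x := t)
          linarith
        rw [real_inner_comm] at h1
        have h2 : 0 ≤ 2 / ⟪α, α⟫ := by positivity
        exact mul_nonneg h2 h1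
      · by_contra hcon
        push_neg at hcon
        have hneg : ⟪lam, α⟫ < 0 := by
          by_contra h2
          push_neg at h2
          have h3 : 0 ≤ 2 / ⟪α, α⟫ * ⟪lam, α⟫ := mul_nonneg (by positivity) h2
          linarith
        exact hwalk (({δ | δ ∈ R.roots ∧ ⟪lam, α⟫ < ⟪lam, δ⟫}).ncard + 1) α hαpos hαsp hneg
          (Nat.lt_succ_self _)
  · -- no longest element: impossible
    exfalso
    rcases Set.eq_empty_or_nonempty Θ with hΘe | ⟨θ, hθΘ⟩
    · apply hex
      refine ⟨1, one_mem _, ?_⟩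
      have hP : R.pos ∩ (Submodule.span ℝ Θ : Set V) = ∅ := by
        rw [hΘe, Submodule.span_empty]
        ext x
        simp only [Set.mem_inter_iff, Set.mem_empty_iff_false, iff_false, not_and]
        intro hx1 hx2
        have hx0 : x = 0 := by simpa using hx2
        exact hR.zero_not_mem (hx0 ▸ hR.pos_subset hx1)
      rw [hP]
      simp
    · have hw1 : R.wTheta Θ = 1 := by
        simp only [RootData.wTheta, longest]
        rw [dif_neg hex]
      have hρ0 : R.rhoTheta Θ = 0 := by
        simp only [RootData.rhoTheta, hw1]
        simp
      have hθr : θ ∈ R.roots := hR.pos_subset (hR.base_subset (hΘ hθΘ))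
      apply hreg θ hθr
      rw [hρ0, zero_add, real_inner_comm]
      exact (Submodule.mem_orthogonal _ μ).mp hμ θ (Submodule.subset_span hθΘ)

end
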